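/- For n ≥ 3, the number c'_{n+1} of ordered ranked trees of size n+1 that are maximally probable at their root and whose 1-2 subtree H(t) equals the whole tree satisfies c'_{n+1} = Σ_{q=1}^{n-1} q!·(n−q)!·2^{min(q,n−q)} = n!·α_n, where α_n = Σ_{q=1}^{n-1} 2^{min(q,n−q)}/C(n,q). -/

import Mathlib

/-- Rooted binary plane trees with a natural-number label at each internal node. -/
inductive OTree where
  | leaf : OTree
  | node : ℕ → OTree → OTree → OTree

/-- Multiset of internal-node labels. -/
def iLabels : OTree → Multiset ℕ
  | .leaf => 0
  | .node k a b => k ::ₘ (iLabels a + iLabels b)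

/-- Size of a tree: its number of internal nodes. -/
def size (t : OTree) : ℕ := (iLabels t).card

/-- Internal labels increase along every root-to-leaf path. -/
def Increasing : OTree → Prop
  | .leaf => True
  | .node k a b => (∀ j ∈ iLabels a + iLabels b, k < j) ∧ Increasing a ∧ Increasing b

/-- An ordered ranked tree of size `n`: internal nodes bijectively labeled
`1,…,n`, increasingly from the root toward the leaves. -/
def IsOrderedRankedTree (n : ℕ) (t : OTree) : Prop :=
  iLabels t = (Finset.Icc 1 n).val ∧ Increasing t

/-- The time-ordered word of coalescences of the two subtrees `L`, `R`:
all internal labels of `L` and `R` sorted increasingly, with each entry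
recorded as `true` if it is an event of `L` and `false` if of `R`. -/
def word (L R : OTree) : List Bool :=
  ((iLabels L + iLabels R).sort (· ≤ ·)).map fun x => decide (x ∈ iLabels L)

/-- The word `w` (with `m ≥ q`) has the form `ℓ^{m-q}{ℓr, rℓ}^q`:
the first `m - q` events are in `L`, then `q` pairs of events follow,
each pair having one event in `L` and one in `R`, in either order. -/
def IsMPWord (m q : ℕ) (w : List Bool) : Prop :=
  (∀ i < m - q, w.getD i false = true) ∧
  ∀ j < q, w.getD (m - q + 2 * j) false ≠ w.getD (m - q + 2 * j + 1) false

/-- The pair of subtrees `a`, `b` of a node makes it maximally probable: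
for some naming of the two subtrees as `L`, `R` with `|L| ≥ |R|`, the sequence
of coalescences has the form `ℓ^{m-q}{ℓr, rℓ}^q`. -/
def MPPair (a b : OTree) : Prop :=
  (size b ≤ size a ∧ IsMPWord (size a) (size b) (word a b)) ∨
  (size a ≤ size b ∧ IsMPWord (size b) (size a) (word b a))

/-- The root of `t` generates a maximally probable subtree. -/
def MPRoot : OTree → Prop
  | .leaf => False
  | .node _ a b => MPPair a b

/-- The root of `t` satisfies the 1-2 condition (one subtree of size at least 1,
the other of size at least 2), i.e. `H(t) = t`. -/
def OneTwoRoot : OTree → Prop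
  | .leaf => False
  | .node _ a b => (1 ≤ size a ∧ 2 ≤ size b) ∨ (2 ≤ size a ∧ 1 ≤ size b)

noncomputable def alpha (n : ℕ) : ℝ :=
  ∑ q ∈ Finset.Icc 1 (n - 1), (2 : ℝ) ^ (min q (n - q)) / (Nat.choose n q : ℝ)

namespace MP
open Finset

lemma iLabels_node (k : ℕ) (a b : OTree) :
    iLabels (.node k a b) = k ::ₘ (iLabels a + iLabels b) := rfl

lemma size_node (k : ℕ) (a b : OTree) :
    size (.node k a b) = size a + size b + 1 := by
  simp [size, iLabels_node]

def TSet (S : Finset ℕ) : Type := {t : OTree // iLabels t = S.val ∧ Increasing t}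

instance : Subsingleton (TSet ∅) := by
  constructor
  rintro ⟨t, ht, _⟩ ⟨t', ht', _⟩
  cases t with
  | leaf => cases t' with
    | leaf => rfl
    | node k a b => simp [iLabels_node] at ht'
  | node k a b => simp [iLabels_node] at ht

/-- decomposition map -/
def dmap (S : Finset ℕ) (hS : S.Nonempty) :
    (Σ A : ↥((S.erase (S.min' hS)).powerset),
      TSet A.1 × TSet ((S.erase (S.min' hS)) \ A.1)) → TSet S :=
  fun x => ⟨.node (S.min' hS) x.2.1.1 x.2.2.1, by
    obtain ⟨⟨A, hA⟩, ⟨a, ha1, ha2⟩, ⟨b, hb1, hb2⟩⟩ := x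
    rw [Finset.mem_powerset] at hA
    simp only
    have hab : iLabels a + iLabels b = (S.erase (S.min' hS)).val := by
      rw [ha1, hb1, sdiff_val, add_comm]
      exact tsub_add_cancel_of_le (Finset.val_le_iff.2 hA)
    constructor
    · rw [iLabels_node, hab, Finset.erase_val, Multiset.cons_erase]
      exact Finset.mem_def.1 (Finset.min'_mem S hS)
    · refine ⟨?_, ha2, hb2⟩
      intro j hj
      rw [hab] at hj
      exact Finset.min'_lt_of_mem_erase_min' S hS hj⟩

lemma dmap_bijective (S : Finset ℕ) (hS : S.Nonempty) : Function.Bijective (dmap S hS) := by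
  constructor
  · rintro ⟨⟨A, hA⟩, ⟨a, ha1, ha2⟩, ⟨b, hb1, hb2⟩⟩ ⟨⟨A', hA'⟩, ⟨a', ha1', ha2'⟩, ⟨b', hb1', hb2'⟩⟩ h
    simp only [dmap, Subtype.mk.injEq, OTree.node.injEq] at h
    obtain ⟨rfl, rfl⟩ := h
    have hAe : A = A' := Finset.val_inj.1 (by rw [← ha1, ← ha1'])
    subst hAe
    rfl
  · rintro ⟨t, ht1, ht2⟩
    cases t with
    | leaf =>
      exfalso
      have := Finset.min'_mem S hS
      rw [← Finset.mem_val, ← ht1] at this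
      simp [iLabels] at this
    | node j a b =>
      rw [iLabels_node] at ht1
      have hjS : j ∈ S := by
        rw [← Finset.mem_val, ← ht1]; exact Multiset.mem_cons_self _ _
      have hjk : j = S.min' hS := by
        refine le_antisymm ?_ (Finset.min'_le S j hjS)
        have hkS : S.min' hS ∈ S.val := Finset.mem_def.1 (Finset.min'_mem S hS)
        rw [← ht1, Multiset.mem_cons] at hkS
        rcases hkS with h | h
        · exact h.symm.le
        · exact (ht2.1 _ h).le
      have hab : iLabels a + iLabels b = (S.erase j).val := by
        have h2 : j ::ₘ (iLabels a + iLabels b) = j ::ₘ (S.erase j).val := by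
          rw [ht1, Finset.erase_val, Multiset.cons_erase (Finset.mem_def.1 hjS)]
        exact (Multiset.cons_inj_right _).1 h2
      have hnd : (iLabels a + iLabels b).Nodup := hab ▸ (S.erase j).nodup
      have hnda : (iLabels a).Nodup := Multiset.nodup_of_le (Multiset.le_add_right _ _) hnd
      have hAsub : (⟨iLabels a, hnda⟩ : Finset ℕ) ⊆ S.erase (S.min' hS) := by
        rw [← hjk]
        refine Finset.val_le_iff.1 ?_
        show iLabels a ≤ _
        rw [← hab]; exact Multiset.le_add_right _ _
      have hbval : iLabels b = ((S.erase (S.min' hS)) \ (⟨iLabels a, hnda⟩ : Finset ℕ)).val := by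
        rw [sdiff_val, ← hjk, ← hab]
        show iLabels b = (iLabels a + iLabels b) - iLabels a
        rw [add_tsub_cancel_left]
      refine ⟨⟨⟨⟨iLabels a, hnda⟩, Finset.mem_powerset.2 hAsub⟩, ⟨a, rfl, ht2.2.1⟩,
        ⟨b, hbval, ht2.2.2⟩⟩, ?_⟩
      refine Subtype.ext ?_
      show OTree.node (S.min' hS) a b = OTree.node j a b
      rw [hjk]

end MP
namespace MP
open Finset

lemma nat_card_sigma {ι : Type*} [Fintype ι] (f : ι → Type*) [∀ i, Finite (f i)] :
    Nat.card (Σ i, f i) = ∑ i, Nat.card (f i) := by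
  haveI : ∀ i, Fintype (f i) := fun i => Fintype.ofFinite _
  rw [Nat.card_eq_fintype_card, Fintype.card_sigma]
  simp [Nat.card_eq_fintype_card]

lemma tset_finite (S : Finset ℕ) : Finite (TSet S) := by
  induction S using Finset.strongInduction with
  | _ S ih =>
    rcases S.eq_empty_or_nonempty with rfl | hS
    · exact Finite.of_subsingleton
    · haveI : ∀ A : ↥((S.erase (S.min' hS)).powerset),
          Finite (TSet A.1 × TSet ((S.erase (S.min' hS)) \ A.1)) := by
        intro ⟨A, hA⟩
        rw [Finset.mem_powerset] at hA
        have h1 : A ⊂ S := hA.trans_ssubset (Finset.erase_ssubset (S.min'_mem hS))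
        have h2 : (S.erase (S.min' hS)) \ A ⊂ S :=
          (Finset.sdiff_subset).trans_ssubset (Finset.erase_ssubset (S.min'_mem hS))
        haveI := ih _ h1
        haveI := ih _ h2
        exact Finite.instProd
      exact Finite.of_surjective (dmap S hS) (dmap_bijective S hS).2

instance (S : Finset ℕ) : Finite (TSet S) := tset_finite S

lemma tset_card (S : Finset ℕ) : Nat.card (TSet S) = S.card.factorial := by
  induction S using Finset.strongInduction with
  | _ S ih =>
    rcases S.eq_empty_or_nonempty with rfl | hS
    · haveI : Unique (TSet ∅) :=
        ⟨⟨⟨.leaf, by simp [iLabels, Increasing]⟩⟩, fun t => Subsingleton.elim _ _⟩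
      simp [Nat.card_unique]
    · set T := S.erase (S.min' hS) with hT
      have hST : S.card = T.card + 1 := by
        have := Finset.card_pos.mpr hS
        rw [hT, Finset.card_erase_of_mem (S.min'_mem hS)]
        omega
      have hTcard : S.card = T.card + 1 := hST
      have key : Nat.card (TSet S) = ∑ A ∈ T.powerset, A.card.factorial * (T.card - A.card).factorial := by
        rw [← Nat.card_eq_of_bijective _ (dmap_bijective S hS), nat_card_sigma]
        rw [← Finset.sum_coe_sort T.powerset
          (fun A => A.card.factorial * (T.card - A.card).factorial)]
        refine Finset.sum_congr rfl ?_
        rintro ⟨A, hA⟩ -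
        rw [Finset.mem_powerset] at hA
        have h1 : A ⊂ S := hA.trans_ssubset (Finset.erase_ssubset (S.min'_mem hS))
        have h2 : T \ A ⊂ S :=
          (Finset.sdiff_subset).trans_ssubset (Finset.erase_ssubset (S.min'_mem hS))
        rw [Nat.card_prod, ih _ h1, ih _ h2, Finset.card_sdiff_of_subset hA]
      rw [key, Finset.sum_powerset]
      have : ∀ j ∈ Finset.range (T.card + 1),
          (∑ A ∈ Finset.powersetCard j T, A.card.factorial * (T.card - A.card).factorial)
            = T.card.choose j * (j.factorial * (T.card - j).factorial) := by
        intro j hj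
        rw [Finset.sum_congr rfl (fun A hA => by
          rw [(Finset.mem_powersetCard.1 hA).2]), Finset.sum_const,
          Finset.card_powersetCard, smul_eq_mul]
      rw [Finset.sum_congr rfl this]
      have : ∀ j ∈ Finset.range (T.card + 1),
          T.card.choose j * (j.factorial * (T.card - j).factorial) = T.card.factorial := by
        intro j hj
        rw [Finset.mem_range] at hj
        rw [← Nat.choose_mul_factorial_mul_factorial (Nat.lt_succ_iff.1 hj)]
        ring
      rw [Finset.sum_congr rfl this, Finset.sum_const, Finset.card_range, smul_eq_mul, hST,
        Nat.factorial_succ]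

end MP
namespace MP
open Finset

/-- the membership word of `A` along `2,…,n+1`. -/
def wordF (n : ℕ) (A : Finset ℕ) : List Bool :=
  (List.range' 2 n).map fun x => decide (x ∈ A)

lemma sort_range' (s k : ℕ) :
    Multiset.sort (↑(List.range' s k) : Multiset ℕ) (· ≤ ·) = List.range' s k := by
  refine List.Perm.eq_of_pairwise' (r := (· ≤ ·)) (Multiset.pairwise_sort _ _) ?_ ?_
  · exact List.pairwise_le_range' (s := s) (n := k)
  · exact Multiset.coe_eq_coe.1 (by rw [Multiset.sort_eq])

lemma Icc_val_eq (n : ℕ) :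
    (Finset.Icc 2 (n + 1)).val = (↑(List.range' 2 n) : Multiset ℕ) := by
  rw [Nat.Icc_eq_range']
  have h : n + 1 + 1 - 2 = n := by omega
  rw [h]

lemma word_eq (n : ℕ) (A B : Finset ℕ) (hd : Disjoint A B) (hu : A ∪ B = Finset.Icc 2 (n + 1))
    (a b : OTree) (ha : iLabels a = A.val) (hb : iLabels b = B.val) :
    word a b = wordF n A := by
  have hval : A.val + B.val = (Finset.Icc 2 (n + 1)).val := by
    rw [← hu, ← Finset.disjUnion_eq_union A B hd]
    rfl
  rw [word, ha, hb, hval, Icc_val_eq, sort_range', wordF]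
  refine List.map_congr_left fun x hx => ?_
  simp [Finset.mem_val]

lemma wordF_getD (n : ℕ) (A : Finset ℕ) (i : ℕ) (hi : i < n) :
    (wordF n A).getD i false = decide (2 + i ∈ A) := by
  have hlen : i < (wordF n A).length := by simp [wordF, hi]
  rw [List.getD_eq_getElem?_getD, List.getElem?_eq_getElem hlen]
  simp [wordF]

end MP
namespace MP
open Finset

instance (m q : ℕ) (w : List Bool) : Decidable (IsMPWord m q w) := by
  unfold IsMPWord; infer_instance

def Wfun (d q' : ℕ) (ε : Fin q' → Bool) : Finset ℕ :=
  Finset.Icc 2 (d + 1) ∪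
    Finset.image (fun j : Fin q' => d + 2 * (j : ℕ) + 2 + (if ε j then 0 else 1)) Finset.univ

lemma mem_Wfun {d q' : ℕ} {ε : Fin q' → Bool} {x : ℕ} :
    x ∈ Wfun d q' ε ↔ (2 ≤ x ∧ x ≤ d + 1) ∨
      ∃ j : Fin q', d + 2 * (j : ℕ) + 2 + (if ε j then 0 else 1) = x := by
  simp [Wfun, Finset.mem_union, Finset.mem_Icc, Finset.mem_image]

lemma pair_mem_Wfun (d q' : ℕ) (ε : Fin q' → Bool) (j : Fin q') :
    (d + 2 * (j : ℕ) + 2 ∈ Wfun d q' ε ↔ ε j = true) ∧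
    (d + 2 * (j : ℕ) + 3 ∈ Wfun d q' ε ↔ ε j = false) := by
  constructor
  · rw [mem_Wfun]
    constructor
    · rintro (⟨h1, h2⟩ | ⟨j', hj'⟩)
      · omega
      · split_ifs at hj' with hε
        · have : j' = j := Fin.ext (by omega)
          rwa [← this]
        · omega
    · intro h
      exact Or.inr ⟨j, by rw [h]; norm_num⟩
  · rw [mem_Wfun]
    constructor
    · rintro (⟨h1, h2⟩ | ⟨j', hj'⟩)
      · omega
      · split_ifs at hj' with hε
        · omega
        · have : j' = j := Fin.ext (by omega)
          rw [← this]
          simp [hε]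
    · intro h
      exact Or.inr ⟨j, by rw [h]; norm_num⟩

lemma Wfun_injective (d q' : ℕ) : Function.Injective (Wfun d q') := by
  intro ε ε' h
  funext j
  have key : (ε j = true) ↔ (ε' j = true) := by
    rw [← (pair_mem_Wfun d q' ε j).1, h, (pair_mem_Wfun d q' ε' j).1]
  cases hε : ε j <;> cases hε' : ε' j <;> simp_all

lemma card_Wfun (d q' : ℕ) (ε : Fin q' → Bool) : (Wfun d q' ε).card = d + q' := by
  rw [Wfun, Finset.card_union_of_disjoint, Nat.card_Icc,
    Finset.card_image_of_injective _ (fun j j' h => by split_ifs at h <;> exact Fin.ext (by omega)),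
    Finset.card_univ, Fintype.card_fin]
  · omega
  · rw [Finset.disjoint_left]
    intro x hx hx'
    rw [Finset.mem_Icc] at hx
    rw [Finset.mem_image] at hx'
    obtain ⟨j, -, hj⟩ := hx'
    split_ifs at hj <;> omega

lemma master_filter_eq (n m q' : ℕ) (hq : q' ≤ m) (hmn : m + q' = n) :
    (Finset.Icc 2 (n + 1)).powerset.filter (fun W => IsMPWord m q' (wordF n W)) =
      Finset.image (Wfun (m - q') q') Finset.univ := by
  ext W
  simp only [Finset.mem_filter, Finset.mem_powerset, Finset.mem_image, Finset.mem_univ, true_and]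
  constructor
  · rintro ⟨hsub, h1, h2⟩
    refine ⟨fun j => decide (m - q' + 2 * (j : ℕ) + 2 ∈ W), ?_⟩
    ext x
    constructor
    · intro hx
      rw [mem_Wfun] at hx
      rcases hx with ⟨hx1, hx2⟩ | ⟨j, hj⟩
      · have hi := h1 (x - 2) (by omega)
        rw [wordF_getD n W (x - 2) (by omega)] at hi
        have hxx : 2 + (x - 2) = x := by omega
        rw [hxx] at hi
        exact of_decide_eq_true hi
      · have hj2 := h2 (j : ℕ) j.2
        rw [wordF_getD n W _ (by have := j.2; omega), wordF_getD n W _ (by have := j.2; omega)] at hj2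
        have heq1 : 2 + (m - q' + 2 * (j : ℕ)) = m - q' + 2 * (j : ℕ) + 2 := by omega
        have heq2 : 2 + (m - q' + 2 * (j : ℕ) + 1) = m - q' + 2 * (j : ℕ) + 3 := by omega
        rw [heq1, heq2] at hj2
        split_ifs at hj with hε
        · have hm := of_decide_eq_true hε
          have hxx : m - q' + 2 * (j : ℕ) + 2 = x := by omega
          exact hxx ▸ hm
        · have hne : (m - q' + 2 * (j : ℕ) + 2 ∈ W) → False := fun hc => hε (decide_eq_true hc)
          have hd2 : decide (m - q' + 2 * (j : ℕ) + 2 ∈ W) = false := by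
            simpa using hne
          rw [hd2] at hj2
          have hm3 : m - q' + 2 * (j : ℕ) + 3 ∈ W := by
            by_contra hc
            simp [hc] at hj2
          have hxx : m - q' + 2 * (j : ℕ) + 3 = x := by omega
          exact hxx ▸ hm3
    · intro hx
      have hxS := hsub hx
      rw [Finset.mem_Icc] at hxS
      rw [mem_Wfun]
      by_cases hsmall : x ≤ m - q' + 1
      · exact Or.inl ⟨hxS.1, hsmall⟩
      · have htlt : x - (m - q') - 2 < 2 * q' := by omega
        set j0 := (x - (m - q') - 2) / 2 with hj0
        have hj0lt : j0 < q' := by omega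
        refine Or.inr ⟨⟨j0, hj0lt⟩, ?_⟩
        have hj2 := h2 j0 hj0lt
        rw [wordF_getD n W _ (by omega), wordF_getD n W _ (by omega)] at hj2
        have heq1 : 2 + (m - q' + 2 * j0) = m - q' + 2 * j0 + 2 := by omega
        have heq2 : 2 + (m - q' + 2 * j0 + 1) = m - q' + 2 * j0 + 3 := by omega
        rw [heq1, heq2] at hj2
        rcases Nat.even_or_odd (x - (m - q') - 2) with he | ho
        · have hx2 : x = m - q' + 2 * j0 + 2 := by
            obtain ⟨c, hc⟩ := he; omega
          have hmem : m - q' + 2 * j0 + 2 ∈ W := hx2 ▸ hx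
          show m - q' + 2 * j0 + 2 + (if decide (m - q' + 2 * j0 + 2 ∈ W) then 0 else 1) = x
          rw [if_pos (decide_eq_true hmem)]
          omega
        · have hx2 : x = m - q' + 2 * j0 + 3 := by
            obtain ⟨c, hc⟩ := ho; omega
          have hmem3 : m - q' + 2 * j0 + 3 ∈ W := hx2 ▸ hx
          have hnot2 : m - q' + 2 * j0 + 2 ∉ W := by
            intro hc
            rw [decide_eq_true hc, decide_eq_true hmem3] at hj2
            exact hj2 rfl
          show m - q' + 2 * j0 + 2 + (if decide (m - q' + 2 * j0 + 2 ∈ W) then 0 else 1) = x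
          rw [if_neg (by simpa using hnot2)]
          omega
  · rintro ⟨ε, rfl⟩
    refine ⟨?_, ?_, ?_⟩
    · intro x hx
      rw [mem_Wfun] at hx
      rw [Finset.mem_Icc]
      rcases hx with ⟨h1, h2⟩ | ⟨j, hj⟩
      · omega
      · have := j.2; split_ifs at hj <;> omega
    · intro i hi
      rw [wordF_getD n _ i (by omega)]
      refine decide_eq_true ?_
      rw [mem_Wfun]
      exact Or.inl ⟨by omega, by omega⟩
    · intro j hj
      rw [wordF_getD n _ _ (by omega), wordF_getD n _ _ (by omega)]
      have heq1 : 2 + (m - q' + 2 * j) = m - q' + 2 * j + 2 := by omega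
      have heq2 : 2 + (m - q' + 2 * j + 1) = m - q' + 2 * j + 3 := by omega
      rw [heq1, heq2]
      have hp := pair_mem_Wfun (m - q') q' ε ⟨j, hj⟩
      cases hε : ε ⟨j, hj⟩
      · rw [decide_eq_false (fun hc => by rw [hp.1.1 hc] at hε; exact Bool.noConfusion hε),
          decide_eq_true (hp.2.2 hε)]
        simp
      · rw [decide_eq_true (hp.1.2 hε),
          decide_eq_false (fun hc => by rw [hp.2.1 hc] at hε; exact Bool.noConfusion hε)]
        simp

lemma master_card (n m q' : ℕ) (hq : q' ≤ m) (hmn : m + q' = n) :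
    ((Finset.Icc 2 (n + 1)).powerset.filter (fun W => IsMPWord m q' (wordF n W))).card = 2 ^ q' := by
  rw [master_filter_eq n m q' hq hmn, Finset.card_image_of_injective _ (Wfun_injective _ _),
    Finset.card_univ]
  simp

lemma card_of_master (n m q' : ℕ) (hq : q' ≤ m) (hmn : m + q' = n) (W : Finset ℕ)
    (hsub : W ⊆ Finset.Icc 2 (n + 1)) (hw : IsMPWord m q' (wordF n W)) : W.card = m := by
  have hmem : W ∈ (Finset.Icc 2 (n + 1)).powerset.filter (fun W => IsMPWord m q' (wordF n W)) := by
    rw [Finset.mem_filter, Finset.mem_powerset]; exact ⟨hsub, hw⟩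
  rw [master_filter_eq n m q' hq hmn, Finset.mem_image] at hmem
  obtain ⟨ε, -, rfl⟩ := hmem
  rw [card_Wfun]
  omega

end MP
namespace MP
open Finset

lemma getD_compl (n : ℕ) (A : Finset ℕ) (i : ℕ) (hi : i < n) :
    (wordF n (Finset.Icc 2 (n + 1) \ A)).getD i false = !(wordF n A).getD i false := by
  rw [wordF_getD _ _ _ hi, wordF_getD _ _ _ hi]
  by_cases h : 2 + i ∈ A <;> simp [h, Finset.mem_sdiff, Finset.mem_Icc] <;> omega

lemma mp_compl (n p : ℕ) (hn : n = 2 * p) (A : Finset ℕ) :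
    IsMPWord p p (wordF n A) → IsMPWord p p (wordF n (Finset.Icc 2 (n + 1) \ A)) := by
  rintro ⟨h1, h2⟩
  refine ⟨fun i hi => absurd hi (by omega), fun j hj => ?_⟩
  have hh := h2 j hj
  rw [getD_compl n A _ (by omega), getD_compl n A _ (by omega)]
  intro heq
  exact hh (Bool.not_inj heq)

def QA (n : ℕ) (A : Finset ℕ) : Prop :=
  ((n - A.card) ≤ A.card ∧ IsMPWord A.card (n - A.card) (wordF n A)) ∨
  (A.card ≤ n - A.card ∧ IsMPWord (n - A.card) A.card (wordF n (Finset.Icc 2 (n + 1) \ A)))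

instance (n : ℕ) (A : Finset ℕ) : Decidable (QA n A) := by
  unfold QA; infer_instance

def goodF (n : ℕ) : Finset (Finset ℕ) :=
  (Finset.Icc 2 (n + 1)).powerset.filter (fun A => 1 ≤ A.card ∧ A.card ≤ n - 1 ∧ QA n A)

lemma goodF_count (n p : ℕ) (hp1 : 1 ≤ p) (hp2 : p ≤ n - 1) (hn : 3 ≤ n) :
    ((goodF n).filter (fun A => A.card = p)).card = 2 ^ min p (n - p) := by
  rcases lt_trichotomy (n - p) p with hlt | heq | hgt
  · -- p > n - p : equals master filter with m = p, q' = n - p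
    have hfeq : (goodF n).filter (fun A => A.card = p) =
        (Finset.Icc 2 (n + 1)).powerset.filter (fun W => IsMPWord p (n - p) (wordF n W)) := by
      ext A
      simp only [goodF, Finset.mem_filter, Finset.mem_powerset, Finset.filter_filter]
      constructor
      · rintro ⟨hsub, ⟨h1, h2, hQ⟩, hcard⟩
        refine ⟨hsub, ?_⟩
        unfold QA at hQ
        rw [hcard] at hQ
        rcases hQ with ⟨-, hw⟩ | ⟨hle, -⟩
        · exact hw
        · omega
      · rintro ⟨hsub, hw⟩
        have hcard : A.card = p := card_of_master n p (n - p) (by omega) (by omega) A hsub hw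
        have hQ : QA n A := by unfold QA; rw [hcard]; exact Or.inl ⟨by omega, hw⟩
        exact ⟨hsub, ⟨by omega, by omega, hQ⟩, hcard⟩
    rw [hfeq, master_card n p (n - p) (by omega) (by omega), Nat.min_eq_right (by omega)]
  · -- p = n - p
    have hn2 : n = 2 * p := by omega
    have hfeq : (goodF n).filter (fun A => A.card = p) =
        (Finset.Icc 2 (n + 1)).powerset.filter (fun W => IsMPWord p p (wordF n W)) := by
      ext A
      simp only [goodF, Finset.mem_filter, Finset.mem_powerset, Finset.filter_filter]
      constructor
      · rintro ⟨hsub, ⟨h1, h2, hQ⟩, hcard⟩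
        refine ⟨hsub, ?_⟩
        unfold QA at hQ
        rw [hcard, heq] at hQ
        rcases hQ with ⟨-, hw⟩ | ⟨-, hw⟩
        · exact hw
        · have := mp_compl n p hn2 (Finset.Icc 2 (n + 1) \ A) hw
          rwa [Finset.sdiff_sdiff_eq_self hsub] at this
      · rintro ⟨hsub, hw⟩
        have hcard : A.card = p := card_of_master n p p le_rfl (by omega) A hsub hw
        have hQ : QA n A := by unfold QA; rw [hcard, heq]; exact Or.inl ⟨le_rfl, hw⟩
        exact ⟨hsub, ⟨by omega, by omega, hQ⟩, hcard⟩
    rw [hfeq, master_card n p p le_rfl (by omega)]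
    congr 1
    omega
  · -- p < n - p : bijection with master filter for m = n - p, q' = p via complement
    have hcard_eq : ((goodF n).filter (fun A => A.card = p)).card =
        ((Finset.Icc 2 (n + 1)).powerset.filter
          (fun W => IsMPWord (n - p) p (wordF n W))).card := by
      refine Finset.card_bij' (fun A _ => Finset.Icc 2 (n + 1) \ A)
        (fun W _ => Finset.Icc 2 (n + 1) \ W) ?_ ?_ ?_ ?_
      · intro A hA
        simp only [goodF, Finset.mem_filter, Finset.mem_powerset, Finset.filter_filter] at hA
        obtain ⟨hsub, ⟨h1, h2, hQ⟩, hcard⟩ := hA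
        unfold QA at hQ
        rw [hcard] at hQ
        simp only [Finset.mem_filter, Finset.mem_powerset]
        refine ⟨Finset.sdiff_subset, ?_⟩
        rcases hQ with ⟨hle, -⟩ | ⟨-, hw⟩
        · omega
        · exact hw
      · intro W hW
        simp only [Finset.mem_filter, Finset.mem_powerset] at hW
        obtain ⟨hsub, hw⟩ := hW
        have hWcard : W.card = n - p := card_of_master n (n - p) p (by omega) (by omega) W hsub hw
        have hIcard : (Finset.Icc 2 (n + 1)).card = n := by
          rw [Nat.card_Icc]; omega
        have hAcard : (Finset.Icc 2 (n + 1) \ W).card = p := by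
          rw [Finset.card_sdiff_of_subset hsub, hIcard, hWcard]; omega
        simp only [goodF, Finset.mem_filter, Finset.mem_powerset, Finset.filter_filter]
        have hQ : QA n (Finset.Icc 2 (n + 1) \ W) := by
          unfold QA
          rw [hAcard]
          right
          refine ⟨by omega, ?_⟩
          rw [Finset.sdiff_sdiff_eq_self hsub]
          exact hw
        exact ⟨Finset.sdiff_subset, ⟨by rw [hAcard]; omega, by rw [hAcard]; omega, hQ⟩, hAcard⟩
      · intro A hA
        simp only [goodF, Finset.mem_filter, Finset.mem_powerset, Finset.filter_filter] at hA
        exact Finset.sdiff_sdiff_eq_self hA.1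
      · intro W hW
        simp only [Finset.mem_filter, Finset.mem_powerset] at hW
        exact Finset.sdiff_sdiff_eq_self hW.1
    rw [hcard_eq, master_card n (n - p) p (by omega) (by omega), Nat.min_eq_left (by omega)]

end MP
namespace MP
open Finset

lemma size_eq_card (a : OTree) (A : Finset ℕ) (h : iLabels a = A.val) : size a = A.card := by
  rw [size, h]; rfl

lemma card_sdiff_Icc (n : ℕ) (A : Finset ℕ) (hA : A ⊆ Finset.Icc 2 (n + 1)) :
    (Finset.Icc 2 (n + 1) \ A).card = n - A.card := by
  rw [Finset.card_sdiff_of_subset hA, Nat.card_Icc]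
  omega

lemma MPPair_iff (n : ℕ) (A : Finset ℕ) (a b : OTree) (hA : A ⊆ Finset.Icc 2 (n + 1))
    (ha : iLabels a = A.val) (hb : iLabels b = (Finset.Icc 2 (n + 1) \ A).val) :
    MPPair a b ↔ QA n A := by
  have hsa : size a = A.card := size_eq_card a A ha
  have hsb : size b = n - A.card := by rw [size_eq_card b _ hb, card_sdiff_Icc n A hA]
  have hw1 : word a b = wordF n A :=
    word_eq n A _ Finset.disjoint_sdiff (Finset.union_sdiff_of_subset hA) a b ha hb
  have hw2 : word b a = wordF n (Finset.Icc 2 (n + 1) \ A) :=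
    word_eq n _ A Finset.sdiff_disjoint (by rw [Finset.sdiff_union_of_subset hA]) b a hb ha
  unfold MPPair QA
  rw [hsa, hsb, hw1, hw2]

lemma erase_Icc (n : ℕ) : (Finset.Icc 1 (n + 1)).erase 1 = Finset.Icc 2 (n + 1) := by
  ext x
  simp only [Finset.mem_erase, Finset.mem_Icc]
  omega

lemma one_mem_Icc_val (n : ℕ) : (1 : ℕ) ∈ (Finset.Icc 1 (n + 1)).val := by
  rw [Finset.mem_val, Finset.mem_Icc]; omega

def gmap (n : ℕ) (hn : 3 ≤ n) :
    (Σ A : ↥(goodF n), TSet A.1 × TSet (Finset.Icc 2 (n + 1) \ A.1)) →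
      {t : OTree // IsOrderedRankedTree (n + 1) t ∧ MPRoot t ∧ OneTwoRoot t} :=
  fun x => ⟨.node 1 x.2.1.1 x.2.2.1, by
    obtain ⟨⟨A, hA⟩, ⟨a, ha1, ha2⟩, ⟨b, hb1, hb2⟩⟩ := x
    simp only [goodF, Finset.mem_filter, Finset.mem_powerset] at hA
    obtain ⟨hsub, hc1, hc2, hQ⟩ := hA
    have hab : iLabels a + iLabels b = (Finset.Icc 2 (n + 1)).val := by
      rw [ha1, hb1, Finset.sdiff_val, add_comm]
      exact tsub_add_cancel_of_le (Finset.val_le_iff.2 hsub)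
    have hAn : A.card ≤ n := by
      have := Finset.card_le_card hsub
      rw [Nat.card_Icc] at this
      omega
    refine ⟨⟨?_, fun j hj => ?_, ha2, hb2⟩, ?_, ?_⟩
    · show (1 : ℕ) ::ₘ (iLabels a + iLabels b) = (Finset.Icc 1 (n + 1)).val
      rw [hab, ← erase_Icc n, Finset.erase_val, Multiset.cons_erase (one_mem_Icc_val n)]
    · rw [hab] at hj
      have := Finset.mem_Icc.1 (Finset.mem_def.2 hj)
      omega
    · exact (MPPair_iff n A a b hsub ha1 hb1).2 hQ
    · show (1 ≤ size a ∧ 2 ≤ size b) ∨ (2 ≤ size a ∧ 1 ≤ size b)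
      rw [size_eq_card a A ha1, size_eq_card b _ hb1, card_sdiff_Icc n A hsub]
      omega⟩

lemma gmap_bijective (n : ℕ) (hn : 3 ≤ n) : Function.Bijective (gmap n hn) := by
  constructor
  · rintro ⟨⟨A, hA⟩, ⟨a, ha1, ha2⟩, ⟨b, hb1, hb2⟩⟩ ⟨⟨A', hA'⟩, ⟨a', ha1', ha2'⟩, ⟨b', hb1', hb2'⟩⟩ h
    simp only [gmap, Subtype.mk.injEq, OTree.node.injEq] at h
    obtain ⟨-, rfl, rfl⟩ := h
    have hAe : A = A' := Finset.val_inj.1 (by rw [← ha1, ← ha1'])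
    subst hAe
    rfl
  · rintro ⟨t, ⟨ht1, ht2⟩, hmp, hot⟩
    cases t with
    | leaf => exact hmp.elim
    | node j a b =>
      rw [iLabels_node] at ht1
      have hjS : j ∈ Finset.Icc 1 (n + 1) := by
        rw [← Finset.mem_val, ← ht1]; exact Multiset.mem_cons_self _ _
      have hj1 : j = 1 := by
        have h1m : (1 : ℕ) ∈ j ::ₘ (iLabels a + iLabels b) := ht1 ▸ one_mem_Icc_val n
        rw [Multiset.mem_cons] at h1m
        rcases h1m with h | h
        · omega
        · have := ht2.1 1 h
          have := (Finset.mem_Icc.1 hjS).1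
          omega
      subst hj1
      have hab : iLabels a + iLabels b = (Finset.Icc 2 (n + 1)).val := by
        have h2 : (1 : ℕ) ::ₘ (iLabels a + iLabels b) =
            (1 : ℕ) ::ₘ (Finset.Icc 2 (n + 1)).val := by
          rw [ht1, ← erase_Icc n, Finset.erase_val, Multiset.cons_erase (one_mem_Icc_val n)]
        exact (Multiset.cons_inj_right _).1 h2
      have hnd : (iLabels a + iLabels b).Nodup := hab ▸ (Finset.Icc 2 (n + 1)).nodup
      have hnda : (iLabels a).Nodup := Multiset.nodup_of_le (Multiset.le_add_right _ _) hnd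
      set A : Finset ℕ := ⟨iLabels a, hnda⟩ with hAdef
      have hAsub : A ⊆ Finset.Icc 2 (n + 1) := by
        refine Finset.val_le_iff.1 ?_
        show iLabels a ≤ _
        rw [← hab]; exact Multiset.le_add_right _ _
      have hbval : iLabels b = (Finset.Icc 2 (n + 1) \ A).val := by
        rw [Finset.sdiff_val, ← hab]
        show iLabels b = (iLabels a + iLabels b) - iLabels a
        rw [add_tsub_cancel_left]
      have hQ : QA n A := (MPPair_iff n A a b hAsub rfl hbval).1 hmp
      have hAn : A.card ≤ n := by
        have := Finset.card_le_card hAsub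
        rw [Nat.card_Icc] at this
        omega
      have hsa : size a = A.card := size_eq_card a A rfl
      have hsb : size b = n - A.card := by rw [size_eq_card b _ hbval, card_sdiff_Icc n A hAsub]
      have hbounds : 1 ≤ A.card ∧ A.card ≤ n - 1 := by
        rcases hot with ⟨h1, h2⟩ | ⟨h1, h2⟩ <;> omega
      have hgood : A ∈ goodF n := by
        simp only [goodF, Finset.mem_filter, Finset.mem_powerset]
        exact ⟨hAsub, hbounds.1, hbounds.2, hQ⟩
      exact ⟨⟨⟨A, hgood⟩, ⟨a, rfl, ht2.2.1⟩, ⟨b, hbval, ht2.2.2⟩⟩, rfl⟩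

lemma main_count (n : ℕ) (hn : 3 ≤ n) :
    Nat.card {t : OTree // IsOrderedRankedTree (n + 1) t ∧ MPRoot t ∧ OneTwoRoot t} =
      ∑ q ∈ Finset.Icc 1 (n - 1), q.factorial * (n - q).factorial * 2 ^ min q (n - q) := by
  rw [← Nat.card_eq_of_bijective _ (gmap_bijective n hn), nat_card_sigma]
  have hterm : ∀ A : ↥(goodF n), Nat.card (TSet A.1 × TSet (Finset.Icc 2 (n + 1) \ A.1)) =
      A.1.card.factorial * (n - A.1.card).factorial := by
    rintro ⟨A, hA⟩
    simp only [goodF, Finset.mem_filter, Finset.mem_powerset] at hA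
    rw [Nat.card_prod, tset_card, tset_card, card_sdiff_Icc n A hA.1]
  rw [Finset.sum_congr rfl (fun A _ => hterm A),
    Finset.sum_coe_sort (goodF n) (fun A => A.card.factorial * (n - A.card).factorial)]
  have hmaps : ∀ A ∈ goodF n, A.card ∈ Finset.Icc 1 (n - 1) := by
    intro A hA
    simp only [goodF, Finset.mem_filter, Finset.mem_powerset] at hA
    rw [Finset.mem_Icc]
    exact ⟨hA.2.1, hA.2.2.1⟩
  rw [← Finset.sum_fiberwise_of_maps_to hmaps
    (fun A => A.card.factorial * (n - A.card).factorial)]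
  refine Finset.sum_congr rfl fun p hp => ?_
  rw [Finset.mem_Icc] at hp
  rw [Finset.sum_congr rfl (fun A hA => by rw [(Finset.mem_filter.1 hA).2]),
    Finset.sum_const, goodF_count n p hp.1 hp.2 hn, smul_eq_mul]
  ring

end MP
theorem count_mp_root_H_eq_t (n : ℕ) (hn : 3 ≤ n) :
    Nat.card { t : OTree // IsOrderedRankedTree (n + 1) t ∧ MPRoot t ∧ OneTwoRoot t } =
        ∑ q ∈ Finset.Icc 1 (n - 1), q.factorial * (n - q).factorial * 2 ^ (min q (n - q)) ∧
      (Nat.card { t : OTree // IsOrderedRankedTree (n + 1) t ∧ MPRoot t ∧ OneTwoRoot t } : ℝ) =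
        (n.factorial : ℝ) * alpha n := by
  refine ⟨MP.main_count n hn, ?_⟩
  rw [MP.main_count n hn, alpha, Finset.mul_sum, Nat.cast_sum]
  refine Finset.sum_congr rfl fun q hq => ?_
  rw [Finset.mem_Icc] at hq
  have hqn : q ≤ n := by omega
  have hfact : (n.choose q : ℝ) * q.factorial * (n - q).factorial = n.factorial := by
    exact_mod_cast congrArg Nat.cast (Nat.choose_mul_factorial_mul_factorial hqn)
  have hC : (n.choose q : ℝ) ≠ 0 := by
    exact_mod_cast (Nat.choose_pos hqn).ne'
  push_cast
  rw [mul_div_assoc'] at *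
  rw [eq_div_iff hC]
  linear_combination (2 : ℝ) ^ min q (n - q) * hfact
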